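/- The sequence of harmonic numbers H_k = ∑_{i=1}^k 1/k is not eventually equal to any rational function: there is no rational function f ∈ ℚ(x) and index d such that H_k = f(k) for all k ≥ d. -/

import Mathlib

/-- The harmonic numbers `H_k = ∑_{i=1}^k 1/i` in `ℚ`. -/
def H (k : ℕ) : ℚ := ∑ i ∈ Finset.Icc 1 k, (1 : ℚ) / i

open Filter Polynomial Topology

private lemma H_eq (k : ℕ) : H k = ∑ i ∈ Finset.range k, (1 : ℚ) / (i + 1) := by
  induction k with
  | zero => simp [H]
  | succ n ih =>
    rw [H, Finset.sum_Icc_succ_top (by omega : 1 ≤ n + 1), ← H, ih, Finset.sum_range_succ]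
    push_cast
    ring

private lemma H_pos {k : ℕ} (hk : 1 ≤ k) : 0 < H k := by
  rw [H_eq]
  apply Finset.sum_pos
  · intro i _
    positivity
  · exact ⟨0, Finset.mem_range.mpr (by omega)⟩

private lemma aux_lim (A B : ℝ[X]) (h : A.degree ≤ B.degree) :
    ∃ c : ℝ, Tendsto (fun x => A.eval x / B.eval x) atTop (𝓝 c) := by
  rcases h.lt_or_eq with h | h
  · exact ⟨0, Polynomial.div_tendsto_zero_of_degree_lt A B h⟩
  · exact ⟨_, Polynomial.div_tendsto_leadingCoeff_div_of_degree_eq A B h⟩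

private lemma H_tendsto : Tendsto (fun k : ℕ => ((H k : ℚ) : ℝ)) atTop atTop := by
  have : ∀ k : ℕ, ((H k : ℚ) : ℝ) = ∑ i ∈ Finset.range k, (1 / (i + 1) : ℝ) := by
    intro k
    rw [H_eq]
    push_cast
    rfl
  simpa only [this] using Real.tendsto_sum_range_one_div_nat_succ_atTop

private lemma H_div_tendsto : Tendsto (fun k : ℕ => ((H k : ℚ) : ℝ) / k) atTop (𝓝 0) := by
  have hu : Tendsto (fun i : ℕ => (1 / ((i : ℝ) + 1))) atTop (𝓝 0) :=
    tendsto_one_div_add_atTop_nhds_zero_nat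
  apply hu.cesaro.congr
  intro k
  rw [inv_mul_eq_div, H_eq]
  push_cast
  rfl

/-- The harmonic number sequence is not eventually equal to any rational function:
there is no `f ∈ ℚ(x)` and index `d` with `H_k = f(k)` for all `k ≥ d`. -/
theorem stmt19 :
    ¬ ∃ (f : RatFunc ℚ) (d : ℕ),
        ∀ k ≥ d, H k = RatFunc.eval (RingHom.id ℚ) (k : ℚ) f := by
  rintro ⟨f, d, hf⟩
  -- f ≠ 0
  have hf0 : f ≠ 0 := by
    intro h
    have := hf (max d 1) (le_max_left _ _)
    rw [h] at this
    simp only [RatFunc.eval] at this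
    rw [RatFunc.num_zero] at this
    simp at this
    exact absurd this (ne_of_gt (H_pos (le_max_right _ _)))
  set φ : ℚ →+* ℝ := Rat.castHom ℝ with hφ
  have hφinj : Function.Injective φ := (Rat.castHom ℝ).injective
  set P : ℝ[X] := f.num.map φ with hP
  set Q : ℝ[X] := f.denom.map φ with hQdef
  have hP0 : P ≠ 0 := (Polynomial.map_ne_zero_iff hφinj).mpr (RatFunc.num_ne_zero hf0)
  have hQ0 : Q ≠ 0 := (Polynomial.map_ne_zero_iff hφinj).mpr f.denom_ne_zero
  -- evaluation identity over ℝ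
  have key : ∀ k : ℕ, k ≥ d → ((H k : ℚ) : ℝ) = P.eval (k : ℝ) / Q.eval (k : ℝ) := by
    intro k hk
    have h1 := hf k hk
    have hnum : P.eval (k : ℝ) = φ (f.num.eval (k : ℚ)) := by
      have : (k : ℝ) = φ (k : ℚ) := by simp [hφ]
      rw [this, hP, Polynomial.eval_map, Polynomial.eval₂_at_apply]
    have hden : Q.eval (k : ℝ) = φ (f.denom.eval (k : ℚ)) := by
      have : (k : ℝ) = φ (k : ℚ) := by simp [hφ]
      rw [this, hQdef, Polynomial.eval_map, Polynomial.eval₂_at_apply]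
    rw [hnum, hden, ← map_div₀]
    rw [RatFunc.eval] at h1
    rw [h1]
    rfl
  rcases le_or_gt P.degree Q.degree with hdeg | hdeg
  · -- f has a finite limit, but H → ∞
    obtain ⟨c, hc⟩ := aux_lim P Q hdeg
    have hc' : Tendsto (fun k : ℕ => P.eval (k : ℝ) / Q.eval (k : ℝ)) atTop (𝓝 c) :=
      hc.comp tendsto_natCast_atTop_atTop
    have : Tendsto (fun k : ℕ => ((H k : ℚ) : ℝ)) atTop (𝓝 c) := by
      apply hc'.congr'
      filter_upwards [eventually_ge_atTop d] with k hk
      exact (key k hk).symm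
    exact not_tendsto_atTop_of_tendsto_nhds this H_tendsto
  · -- deg Q < deg P : consider (Q*X)/P which has a finite limit, but equals k/H_k → ∞
    have hdeg' : (Q * X).degree ≤ P.degree := by
      rw [Polynomial.degree_mul_X, Polynomial.degree_eq_natDegree hQ0,
        Polynomial.degree_eq_natDegree hP0]
      rw [Polynomial.degree_eq_natDegree hQ0, Polynomial.degree_eq_natDegree hP0] at hdeg
      have : Q.natDegree < P.natDegree := by exact_mod_cast hdeg
      exact_mod_cast Nat.succ_le_of_lt this
    obtain ⟨c, hc⟩ := aux_lim (Q * X) P hdeg'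
    have hc' : Tendsto (fun k : ℕ => (Q * X).eval (k : ℝ) / P.eval (k : ℝ)) atTop (𝓝 c) :=
      hc.comp tendsto_natCast_atTop_atTop
    -- eventually this equals k / H k
    have hQroots : ∀ᶠ k : ℕ in atTop, Q.eval (k : ℝ) ≠ 0 :=
      tendsto_natCast_atTop_atTop.eventually (Polynomial.eventually_no_roots Q hQ0)
    have hProots : ∀ᶠ k : ℕ in atTop, P.eval (k : ℝ) ≠ 0 :=
      tendsto_natCast_atTop_atTop.eventually (Polynomial.eventually_no_roots P hP0)
    have heq : ∀ᶠ k : ℕ in atTop,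
        (Q * X).eval (k : ℝ) / P.eval (k : ℝ) = (k : ℝ) / ((H k : ℚ) : ℝ) := by
      filter_upwards [eventually_ge_atTop d, eventually_ge_atTop 1, hQroots, hProots]
        with k hkd hk1 hkQ hkP
      have hH := key k hkd
      rw [Polynomial.eval_mul, Polynomial.eval_X, hH, div_div_eq_mul_div]
      ring
    -- but k / H k → ∞
    have hinv : Tendsto (fun k : ℕ => (k : ℝ) / ((H k : ℚ) : ℝ)) atTop atTop := by
      have h1 : Tendsto (fun k : ℕ => ((H k : ℚ) : ℝ) / k) atTop (𝓝[>] 0) := by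
        rw [tendsto_nhdsWithin_iff]
        refine ⟨H_div_tendsto, ?_⟩
        filter_upwards [eventually_ge_atTop 1] with k hk
        have hHpos : (0 : ℝ) < ((H k : ℚ) : ℝ) := by exact_mod_cast H_pos hk
        have hkpos : (0 : ℝ) < k := by exact_mod_cast hk
        exact Set.mem_Ioi.mpr (div_pos hHpos hkpos)
      have := h1.inv_tendsto_nhdsGT_zero
      apply this.congr
      intro k
      simp [inv_div]
    have : Tendsto (fun k : ℕ => (Q * X).eval (k : ℝ) / P.eval (k : ℝ)) atTop atTop :=
      hinv.congr' (by filter_upwards [heq] with k hk using hk.symm)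
    exact not_tendsto_atTop_of_tendsto_nhds hc' this
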